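/- For all integers l ≥ m ≥ n ≥ 1, the uniform averages over order-preserving surjections compose to a uniform average: Q_{m,n} * Q_{l,m} = Q_{l,n} in K[Part(l,n)]. In particular, the element P_{m,n} defined by P_{n,n} = δ_{(1^n)}, P_{m,m−1} = δ_{(2,1^{m−2})} and P_{m,n} = P_{n+1,n} * P_{n+2,n+1} * … * P_{m,m−1} satisfies P_{m,n} = Q_{m,n}. -/

import Mathlib

open Finset Function

/-- The multiset of fiber cardinalities of a map `f : Fin a → Fin b`. -/
def proj {a b : ℕ} (f : Fin a → Fin b) : Multiset ℕ :=
  Multiset.map (fun i : Fin b => (Finset.univ.filter fun j => f j = i).card)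
    (Finset.univ : Finset (Fin b)).val

section basic
variable {a b c : ℕ}

def fibsz (f : Fin a → Fin b) (i : Fin b) : ℕ := (Finset.univ.filter fun j => f j = i).card

lemma proj_def (f : Fin a → Fin b) : proj f = Multiset.map (fibsz f) Finset.univ.val := rfl

lemma proj_congr {f g : Fin a → Fin b} (h : ∀ i, fibsz f i = fibsz g i) : proj f = proj g := by
  simp [proj_def, funext h]

lemma fibsz_comp (s : Fin b → Fin c) (t : Fin a → Fin b) (j : Fin c) :
    fibsz (s ∘ t) j = ∑ i ∈ Finset.univ.filter fun i => s i = j, fibsz t i := by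
  unfold fibsz
  rw [Finset.card_eq_sum_card_fiberwise (f := t)
    (t := Finset.univ.filter fun i => s i = j)]
  · apply Finset.sum_congr rfl
    intro i hi
    simp only [Finset.mem_filter, Finset.mem_univ, true_and] at hi
    congr 1
    ext x
    simp only [Finset.mem_filter, Finset.mem_univ, true_and, comp_apply]
    constructor
    · rintro ⟨-, h2⟩; exact h2
    · intro h2; exact ⟨by rw [h2, hi], h2⟩
  · intro x hx
    simp only [Finset.mem_filter, Finset.mem_univ, true_and, comp_apply] at hx ⊢
    simpa using hx

lemma sum_fibsz (t : Fin a → Fin b) : ∑ i, fibsz t i = a := by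
  unfold fibsz
  rw [← Finset.card_eq_sum_card_fiberwise (fun x _ => Finset.mem_univ (t x)), Finset.card_univ,
    Fintype.card_fin]

lemma fibsz_pos {t : Fin a → Fin b} (ht : Surjective t) (i : Fin b) : 1 ≤ fibsz t i := by
  obtain ⟨x, hx⟩ := ht i
  exact Finset.card_pos.2 ⟨x, by simp [hx]⟩

lemma fibsz_comp_equiv (f : Fin a → Fin b) (e : Equiv.Perm (Fin a)) (i : Fin b) :
    fibsz (f ∘ ⇑e) i = fibsz f i := by
  unfold fibsz
  apply Finset.card_bij (fun x _ => e x)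
  · intro x hx; simpa using (by simpa using hx : f (e x) = i)
  · intro x _ y _ h; exact e.injective h
  · intro y hy
    exact ⟨e.symm y, by simpa using (by simpa using hy : f y = i), by simp⟩

lemma fibsz_equiv_comp (f : Fin a → Fin b) (e : Equiv.Perm (Fin b)) (i : Fin b) :
    fibsz (⇑e ∘ f) i = fibsz f (e.symm i) := by
  unfold fibsz
  congr 1
  ext x
  simp [Equiv.eq_symm_apply]

lemma proj_comp_equiv (f : Fin a → Fin b) (e : Equiv.Perm (Fin a)) :
    proj (f ∘ ⇑e) = proj f :=
  proj_congr fun i => fibsz_comp_equiv f e i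

lemma proj_equiv_comp (f : Fin a → Fin b) (e : Equiv.Perm (Fin b)) :
    proj (⇑e ∘ f) = proj f := by
  rw [proj_def, proj_def]
  have h1 : Multiset.map (⇑e.symm) (Finset.univ : Finset (Fin b)).val =
      (Finset.univ : Finset (Fin b)).val := by
    have := Finset.map_univ_equiv e.symm
    calc Multiset.map (⇑e.symm) (Finset.univ : Finset (Fin b)).val
        = (Finset.map e.symm.toEmbedding Finset.univ).val := by rw [Finset.map_val]; rfl
      _ = _ := by rw [this]
  have h2 : (fibsz (⇑e ∘ f)) = (fibsz f) ∘ ⇑e.symm := funext fun i => fibsz_equiv_comp f e i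
  rw [h2, ← Multiset.map_map, h1]

section decomp
variable {a b : ℕ}

lemma count_proj (f : Fin a → Fin b) (v : ℕ) :
    Multiset.count v (proj f) = (Finset.univ.filter fun i => fibsz f i = v).card := by
  rw [proj_def, Multiset.count_map]
  simp only [eq_comm]
  rfl

lemma exists_perm_fibsz {f g : Fin a → Fin b} (h : proj f = proj g) :
    ∃ π : Equiv.Perm (Fin b), ∀ i, fibsz f i = fibsz g (π i) := by
  classical
  have hcard : ∀ v : ℕ, Fintype.card {i : Fin b // fibsz f i = v} =
      Fintype.card {i : Fin b // fibsz g i = v} := by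
    intro v
    rw [Fintype.card_subtype, Fintype.card_subtype]
    have := count_proj f v
    rw [h, count_proj g v] at this
    exact this.symm ▸ rfl
  have e : ∀ v : ℕ, {i : Fin b // fibsz f i = v} ≃ {i : Fin b // fibsz g i = v} :=
    fun v => Fintype.equivOfCardEq (hcard v)
  refine ⟨Equiv.ofFiberEquiv e, fun i => ?_⟩
  exact (Equiv.ofFiberEquiv_map e i).symm

lemma exists_decomp {f g : Fin a → Fin b} (h : proj f = proj g) :
    ∃ (π : Equiv.Perm (Fin b)) (τ : Equiv.Perm (Fin a)), g = ⇑π ∘ f ∘ ⇑τ := by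
  classical
  obtain ⟨π, hπ⟩ := exists_perm_fibsz h
  have hcard : ∀ i : Fin b, Fintype.card {x : Fin a // f x = i} =
      Fintype.card {x : Fin a // (⇑π.symm ∘ g) x = i} := by
    intro i
    rw [Fintype.card_subtype, Fintype.card_subtype]
    have : fibsz (⇑π.symm ∘ g) i = fibsz g (π i) := by
      have := fibsz_equiv_comp g π.symm i
      simpa using this
    have h2 : fibsz f i = fibsz (⇑π.symm ∘ g) i := by rw [this]; exact hπ i
    unfold fibsz at h2
    convert h2 using 2 <;> rfl
  have e : ∀ i : Fin b, {x : Fin a // f x = i} ≃ {x : Fin a // (⇑π.symm ∘ g) x = i} :=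
    fun i => Fintype.equivOfCardEq (hcard i)
  refine ⟨π, (Equiv.ofFiberEquiv e).symm, ?_⟩
  funext x
  have := Equiv.ofFiberEquiv_map e ((Equiv.ofFiberEquiv e).symm x)
  simp only [Equiv.apply_symm_apply, Function.comp_apply] at this ⊢
  rw [← this, Equiv.apply_symm_apply]

end decomp

/-- The composite `δ_{proj f} * δ_{proj g} = (1/m!) Σ_{σ ∈ S_m} δ_{proj (f∘σ∘g)}`,
for representatives `f : Fin m → Fin n` and `g : Fin l → Fin m`, with values in the
free `K`-vector space on multisets of natural numbers (in which the free vector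
space `K[Part(l,n)]` on partitions embeds). -/
noncomputable def starElt (K : Type) [Field K] {l m n : ℕ}
    (f : Fin m → Fin n) (g : Fin l → Fin m) : Multiset ℕ →₀ K :=
  (m.factorial : K)⁻¹ •
    ∑ σ : Equiv.Perm (Fin m), Finsupp.single (proj (f ∘ ⇑σ ∘ g)) (1 : K)

/-- `δ_λ * δ_μ`, defined via a choice of representatives (independent of the choice). -/
noncomputable def starOf (K : Type) [Field K] (m n l : ℕ) (lam mu : Multiset ℕ) :
    Multiset ℕ →₀ K :=
  if h : (∃ f : Fin m → Fin n, Function.Surjective f ∧ proj f = lam) ∧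
      (∃ g : Fin l → Fin m, Function.Surjective g ∧ proj g = mu) then
    starElt K h.1.choose h.2.choose
  else 0

section welldef
variable (K : Type) [Field K] {l m n : ℕ}

lemma starElt_congr {f f' : Fin m → Fin n} {g g' : Fin l → Fin m}
    (hf : proj f = proj f') (hg : proj g = proj g') :
    starElt K f g = starElt K f' g' := by
  obtain ⟨π, τ, hfd⟩ := exists_decomp hf
  obtain ⟨ρ, θ, hgd⟩ := exists_decomp hg
  unfold starElt
  congr 1
  refine Fintype.sum_bijective (fun σ : Equiv.Perm (Fin m) => τ⁻¹ * σ * ρ⁻¹)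
    ((Group.mulRight_bijective ρ⁻¹).comp (Group.mulLeft_bijective τ⁻¹)) _ _ fun σ => ?_
  congr 1
  rw [hfd, hgd]
  have h1 : (⇑π ∘ f ∘ ⇑τ) ∘ ⇑(τ⁻¹ * σ * ρ⁻¹) ∘ ⇑ρ ∘ g ∘ ⇑θ = ⇑π ∘ ((f ∘ ⇑σ ∘ g) ∘ ⇑θ) := by
    funext x; simp [Equiv.Perm.mul_apply]
  rw [h1, proj_equiv_comp, proj_comp_equiv]

lemma starOf_eq {f : Fin m → Fin n} {g : Fin l → Fin m}
    (hf : Function.Surjective f) (hg : Function.Surjective g) :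
    starOf K m n l (proj f) (proj g) = starElt K f g := by
  have h : (∃ f' : Fin m → Fin n, Function.Surjective f' ∧ proj f' = proj f) ∧
      (∃ g' : Fin l → Fin m, Function.Surjective g' ∧ proj g' = proj g) :=
    ⟨⟨f, hf, rfl⟩, ⟨g, hg, rfl⟩⟩
  rw [starOf, dif_pos h]
  exact starElt_congr K h.1.choose_spec.2 h.2.choose_spec.2

end welldef

section mono
variable {a b : ℕ}

lemma card_filter_le' (x : Fin a) : (Finset.univ.filter fun y => y ≤ x).card = x.val + 1 := by
  have : (Finset.univ.filter fun y => y ≤ x) = Finset.Iic x := by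
    ext y; simp
  rw [this, Fin.card_Iic]

lemma card_filter_lt (x : Fin a) : (Finset.univ.filter fun y => y < x).card = x.val := by
  have : (Finset.univ.filter fun y => y < x) = Finset.Iio x := by
    ext y; simp
  rw [this, Fin.card_Iio]

lemma monotone_card_lt {t : Fin a → Fin b} (ht : Monotone t) (i : Fin b) :
    (Finset.univ.filter fun x => t x < i).card = ∑ i' ∈ Finset.univ.filter (· < i), fibsz t i' := by
  rw [Finset.card_eq_sum_card_fiberwise (f := t) (t := Finset.univ.filter (· < i))
    (fun x hx => by simpa using (by simpa using hx : t x < i))]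
  apply Finset.sum_congr rfl
  intro i' hi'
  simp only [Finset.mem_filter, Finset.mem_univ, true_and] at hi'
  unfold fibsz
  congr 1
  ext x
  simp only [Finset.mem_filter, Finset.mem_univ, true_and]
  exact ⟨fun h => h.2, fun h => ⟨h ▸ hi', h⟩⟩

lemma monotone_lt_iff {t : Fin a → Fin b} (ht : Monotone t) (x : Fin a) (i : Fin b) :
    t x < i ↔ x.val < (Finset.univ.filter fun y => t y < i).card := by
  constructor
  · intro h
    have hsub : (Finset.univ.filter fun y => y ≤ x) ⊆ (Finset.univ.filter fun y => t y < i) := by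
      intro y hy
      simp only [Finset.mem_filter, Finset.mem_univ, true_and] at hy ⊢
      exact lt_of_le_of_lt (ht hy) h
    have := Finset.card_le_card hsub
    rw [card_filter_le'] at this
    omega
  · intro h
    by_contra hc
    push_neg at hc
    have hsub : (Finset.univ.filter fun y => t y < i) ⊆ (Finset.univ.filter fun y => y < x) := by
      intro y hy
      simp only [Finset.mem_filter, Finset.mem_univ, true_and] at hy ⊢
      by_contra hyx
      push_neg at hyx
      exact absurd (lt_of_lt_of_le hy hc) (not_lt.2 (ht hyx))
    have := Finset.card_le_card hsub
    rw [card_filter_lt] at this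
    omega

lemma mono_unique {t t' : Fin a → Fin b} (ht : Monotone t) (ht' : Monotone t')
    (h : ∀ i, fibsz t i = fibsz t' i) : t = t' := by
  have key : ∀ i, (Finset.univ.filter fun x => t x < i).card
      = (Finset.univ.filter fun x => t' x < i).card := by
    intro i
    rw [monotone_card_lt ht, monotone_card_lt ht']
    exact Finset.sum_congr rfl fun i' _ => h i'
  funext x
  by_contra hne
  rcases lt_or_gt_of_ne (Fin.val_ne_iff.mpr hne) with hlt | hlt
  · have h1 : t x < t' x := Fin.lt_def.2 hlt
    have := (monotone_lt_iff ht x (t' x)).1 h1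
    rw [key] at this
    have h2 := (monotone_lt_iff ht' x (t' x)).2 this
    exact lt_irrefl _ h2
  · have h1 : t' x < t x := Fin.lt_def.2 hlt
    have := (monotone_lt_iff ht' x (t x)).1 h1
    rw [← key] at this
    have h2 := (monotone_lt_iff ht x (t x)).2 this
    exact lt_irrefl _ h2

noncomputable def mk_mono (g : Fin a → Fin b) : Fin a → Fin b := g ∘ ⇑(Tuple.sort g)

lemma monotone_mk_mono (g : Fin a → Fin b) : Monotone (mk_mono g) := Tuple.monotone_sort g

lemma surjective_mk_mono {g : Fin a → Fin b} (hg : Function.Surjective g) :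
    Function.Surjective (mk_mono g) := hg.comp (Equiv.surjective _)

lemma fibsz_mk_mono (g : Fin a → Fin b) (i : Fin b) : fibsz (mk_mono g) i = fibsz g i :=
  fibsz_comp_equiv g (Tuple.sort g) i

end mono

section starts
variable {a b : ℕ}

def strt (t : Fin a → Fin b) : Finset (Fin a) :=
  Finset.univ.filter fun x => ∀ y, y < x → t y ≠ t x

noncomputable def minFib {t : Fin a → Fin b} (ht : Function.Surjective t) (i : Fin b) : Fin a :=
  (Finset.univ.filter fun x => t x = i).min' (by
    obtain ⟨x, hx⟩ := ht i
    exact ⟨x, by simp [hx]⟩)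

lemma t_minFib {t : Fin a → Fin b} (ht : Function.Surjective t) (i : Fin b) :
    t (minFib ht i) = i := by
  have := Finset.min'_mem (Finset.univ.filter fun x => t x = i) (by
    obtain ⟨x, hx⟩ := ht i
    exact ⟨x, by simp [hx]⟩)
  simpa [minFib] using this

lemma minFib_le {t : Fin a → Fin b} (ht : Function.Surjective t) {i : Fin b} {x : Fin a}
    (hx : t x = i) : minFib ht i ≤ x :=
  Finset.min'_le _ _ (by simp [hx])

lemma minFib_strictMono {t : Fin a → Fin b} (ht : Function.Surjective t) (hm : Monotone t) :
    StrictMono (minFib ht) := by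
  intro i i' h
  by_contra hc
  push_neg at hc
  have := hm hc
  rw [t_minFib ht i', t_minFib ht i] at this
  exact absurd (lt_of_lt_of_le h this) (lt_irrefl i)

lemma strt_eq_image {t : Fin a → Fin b} (ht : Function.Surjective t) :
    strt t = Finset.image (minFib ht) Finset.univ := by
  ext x
  simp only [strt, Finset.mem_filter, Finset.mem_univ, true_and, Finset.mem_image]
  constructor
  · intro h
    refine ⟨t x, ?_⟩
    have h1 : minFib ht (t x) ≤ x := minFib_le ht rfl
    rcases lt_or_eq_of_le h1 with h2 | h2
    · exact absurd (t_minFib ht (t x)) (h _ h2)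
    · exact h2
  · rintro ⟨i, rfl⟩
    intro y hy hty
    have := minFib_le ht (hty.trans (t_minFib ht i))
    exact absurd (lt_of_le_of_lt this hy) (lt_irrefl _)

lemma card_strt {t : Fin a → Fin b} (ht : Function.Surjective t) : (strt t).card = b := by
  rw [strt_eq_image ht, Finset.card_image_of_injective _ (fun i j h => by
    rw [← t_minFib ht i, ← t_minFib ht j, h]), Finset.card_univ, Fintype.card_fin]

lemma zero_mem_strt (ha : 0 < a) (t : Fin a → Fin b) : (⟨0, ha⟩ : Fin a) ∈ strt t := by
  simp only [strt, Finset.mem_filter, Finset.mem_univ, true_and]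
  intro y hy
  exact absurd hy (by simp [Fin.lt_def])

-- reconstruction of a monotone map from its start set
def fromSet (ha : 0 < a) (S : Finset (Fin a)) (h0 : (⟨0, ha⟩ : Fin a) ∈ S) (hc : S.card = b) :
    Fin a → Fin b := fun x =>
  ⟨(S.filter (· ≤ x)).card - 1, by
    have h1 : 1 ≤ (S.filter (· ≤ x)).card :=
      Finset.card_pos.2 ⟨⟨0, ha⟩, Finset.mem_filter.2 ⟨h0, by simp [Fin.le_def]⟩⟩
    have h2 : (S.filter (· ≤ x)).card ≤ b := hc ▸ Finset.card_filter_le _ _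
    omega⟩

lemma fromSet_monotone (ha : 0 < a) (S : Finset (Fin a)) (h0 : (⟨0, ha⟩ : Fin a) ∈ S)
    (hc : S.card = b) : Monotone (fromSet ha S h0 hc) := by
  intro x y hxy
  simp only [fromSet, Fin.mk_le_mk]
  have : (S.filter (· ≤ x)).card ≤ (S.filter (· ≤ y)).card :=
    Finset.card_le_card (Finset.monotone_filter_right S (fun z _ hz => le_trans hz hxy))
  omega

lemma fromSet_card_filter (ha : 0 < a) (S : Finset (Fin a)) (hc : S.card = b) (i : Fin b) :
    (S.filter (· ≤ ((S.orderIsoOfFin hc i : Fin a)))).card = i.val + 1 := by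
  have himg : S.filter (· ≤ ((S.orderIsoOfFin hc i : Fin a)))
      = (Finset.univ.filter (· ≤ i)).image (fun j => (S.orderIsoOfFin hc j : Fin a)) := by
    ext z
    simp only [Finset.mem_filter, Finset.mem_image, Finset.mem_univ, true_and]
    constructor
    · rintro ⟨hzS, hz⟩
      refine ⟨(S.orderIsoOfFin hc).symm ⟨z, hzS⟩, ?_, by simp⟩
      rw [← OrderIso.le_iff_le (S.orderIsoOfFin hc)]
      rw [OrderIso.apply_symm_apply, ← Subtype.coe_le_coe]; simpa using hz
    · rintro ⟨j, hj, rfl⟩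
      exact ⟨Finset.coe_mem _, by exact_mod_cast (OrderIso.le_iff_le (S.orderIsoOfFin hc)).2 hj⟩
  rw [himg, Finset.card_image_of_injective, card_filter_le']
  intro i j h
  exact (S.orderIsoOfFin hc).injective (Subtype.ext h)

lemma fromSet_surjective (ha : 0 < a) (S : Finset (Fin a)) (h0 : (⟨0, ha⟩ : Fin a) ∈ S)
    (hc : S.card = b) : Function.Surjective (fromSet ha S h0 hc) := by
  intro i
  refine ⟨(S.orderIsoOfFin hc i : Fin a), ?_⟩
  simp only [fromSet]
  rw [Fin.ext_iff]
  simp only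
  rw [fromSet_card_filter ha S hc i]
  omega

end starts

section starts2
variable {a b c : ℕ}

lemma strt_fromSet (ha : 0 < a) (S : Finset (Fin a)) (h0 : (⟨0, ha⟩ : Fin a) ∈ S)
    (hc : S.card = b) : strt (fromSet ha S h0 hc) = S := by
  ext x
  simp only [strt, Finset.mem_filter, Finset.mem_univ, true_and]
  constructor
  · intro h
    by_contra hxS
    have hx0 : x ≠ ⟨0, ha⟩ := fun hx => hxS (hx ▸ h0)
    have hxv : 1 ≤ x.val := by
      rcases Nat.eq_zero_or_pos x.val with h1 | h1
      · exact absurd (Fin.ext h1) hx0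
      · exact h1
    set y : Fin a := ⟨x.val - 1, by omega⟩ with hy
    have hyx : y < x := by rw [Fin.lt_def]; simp [hy]; omega
    refine h y hyx ?_
    have hfil : S.filter (· ≤ y) = S.filter (· ≤ x) := by
      apply Finset.filter_congr
      intro z hz
      have hzx : z ≠ x := fun h => hxS (h ▸ hz)
      rw [Fin.le_def, Fin.le_def]
      simp only [hy, eq_iff_iff]
      have : z.val ≠ x.val := fun h => hzx (Fin.ext h)
      omega
    simp only [fromSet, Fin.ext_iff]
    rw [hfil]
  · intro hxS y hyx
    simp only [fromSet, Fin.ext_iff, ne_eq]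
    have hsub : S.filter (· ≤ y) ⊂ S.filter (· ≤ x) := by
      refine ⟨Finset.monotone_filter_right S (fun z _ hz => le_trans hz (le_of_lt hyx)), ?_⟩
      intro hcon
      have hx : x ∈ S.filter (· ≤ x) := Finset.mem_filter.2 ⟨hxS, le_refl x⟩
      have := hcon hx
      simp only [Finset.mem_filter] at this
      exact absurd this.2 (not_le.2 hyx)
    have hlt := Finset.card_lt_card hsub
    have h1 : 1 ≤ (S.filter (· ≤ y)).card :=
      Finset.card_pos.2 ⟨⟨0, ha⟩, Finset.mem_filter.2 ⟨h0, by simp [Fin.le_def]⟩⟩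
    omega

lemma fromSet_strt {t : Fin a → Fin b} (ha : 0 < a) (ht : Function.Surjective t)
    (hm : Monotone t) :
    fromSet ha (strt t) (zero_mem_strt ha t) ((card_strt ht)) = t := by
  funext x
  simp only [fromSet, Fin.ext_iff]
  have key : ((strt t).filter (· ≤ x)).card = (t x).val + 1 := by
    have himg : (strt t).filter (· ≤ x)
        = (Finset.univ.filter (· ≤ t x)).image (minFib ht) := by
      rw [strt_eq_image ht]
      ext z
      simp only [Finset.mem_filter, Finset.mem_image, Finset.mem_univ, true_and]
      constructor
      · rintro ⟨⟨i, rfl⟩, hle⟩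
        refine ⟨i, ?_, rfl⟩
        calc i = t (minFib ht i) := (t_minFib ht i).symm
          _ ≤ t x := hm hle
      · rintro ⟨i, hi, rfl⟩
        exact ⟨⟨i, rfl⟩, le_trans ((minFib_strictMono ht hm).monotone hi) (minFib_le ht rfl)⟩
    rw [himg, Finset.card_image_of_injective _ (fun i j h => by
      rw [← t_minFib ht i, ← t_minFib ht j, h]), card_filter_le']
  omega

lemma not_mem_strt {t : Fin a → Fin b} {x : Fin a} (h : x ∉ strt t) :
    ∃ y, y < x ∧ t y = t x := by
  simp only [strt, Finset.mem_filter, Finset.mem_univ, true_and, not_forall] at h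
  obtain ⟨y, hy, hty⟩ := h
  exact ⟨y, hy, not_not.1 hty⟩

lemma refines_aux {t : Fin a → Fin b} {u : Fin a → Fin c} (ht : Monotone t) (hu : Monotone u)
    (hsub : strt u ⊆ strt t) :
    ∀ N (x y : Fin a), x.val ≤ N → y ≤ x → t y = t x → u y = u x := by
  intro N
  induction N with
  | zero =>
    intro x y hx hyx _
    have : y = x := Fin.ext (by omega)
    rw [this]
  | succ N ih =>
    intro x y hx hyx hty
    rcases eq_or_lt_of_le hyx with h | h
    · rw [h]
    · have hxt : x ∉ strt t := by
        simp only [strt, Finset.mem_filter, Finset.mem_univ, true_and, not_forall]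
        exact ⟨y, h, not_not.2 hty⟩
      have hxu : x ∉ strt u := fun hc => hxt (hsub hc)
      obtain ⟨w, hwx, hw⟩ := not_mem_strt hxu
      have hxv : 1 ≤ x.val := by
        have := h
        rw [Fin.lt_def] at this
        omega
      set p : Fin a := ⟨x.val - 1, by omega⟩ with hp
      have hpx : p ≤ x := by
        rw [Fin.le_def]; exact (Nat.sub_le _ _ : x.val - 1 ≤ x.val)
      have hwp : w ≤ p := by
        rw [Fin.lt_def] at hwx
        rw [Fin.le_def]; exact (by omega : w.val ≤ x.val - 1)
      have hyp : y ≤ p := by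
        rw [Fin.lt_def] at h
        rw [Fin.le_def]; exact (by omega : y.val ≤ x.val - 1)
      have hup : u p = u x := le_antisymm (hu hpx) (hw ▸ hu hwp)
      have htp : t p = t x := le_antisymm (ht hpx) (hty ▸ ht hyp)
      have := ih p y (by simp [hp]; omega) hyp (htp.trans hty.symm).symm
      rw [this, hup]

lemma refines_of_strt_subset {t : Fin a → Fin b} {u : Fin a → Fin c}
    (ht : Monotone t) (hu : Monotone u) (hsub : strt u ⊆ strt t)
    {x y : Fin a} (h : t x = t y) : u x = u y := by
  rcases le_total y x with hle | hle
  · exact (refines_aux ht hu hsub x.val x y le_rfl hle h.symm).symm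
  · exact refines_aux ht hu hsub y.val y x le_rfl hle h

lemma strt_subset_of_refines {t : Fin a → Fin b} {u : Fin a → Fin c}
    (h : ∀ x y, t x = t y → u x = u y) : strt u ⊆ strt t := by
  intro x hx
  simp only [strt, Finset.mem_filter, Finset.mem_univ, true_and] at hx ⊢
  intro y hy hty
  exact hx y hy (h y x hty)

end starts2

/-- The composition `* : K[Part(m,n)] × K[Part(l,m)] → K[Part(l,n)]`, as the bilinear
extension of `δ_λ * δ_μ = (1/m!) Σ_{σ ∈ S_m} δ_{proj (f∘σ∘g)}` (representatives
`proj f = λ`, `proj g = μ`). -/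
noncomputable def starComp (K : Type) [Field K] (m n l : ℕ)
    (x y : Multiset ℕ →₀ K) : Multiset ℕ →₀ K :=
  ∑ a ∈ x.support, ∑ b ∈ y.support, (x a * y b) • starOf K m n l a b

/-- The set of order-preserving surjections `Fin m → Fin n`. -/
noncomputable def OSurj (m n : ℕ) : Finset (Fin m → Fin n) :=
  open scoped Classical in
  Finset.univ.filter fun s => Monotone s ∧ Function.Surjective s

section osurj
variable {l m n : ℕ}

lemma mem_OSurj {s : Fin m → Fin n} : s ∈ OSurj m n ↔ Monotone s ∧ Function.Surjective s := by
  simp [OSurj]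

lemma OSurj_nonempty (hn : 1 ≤ n) (hm : n ≤ m) : (OSurj m n).Nonempty := by
  refine ⟨fun x => ⟨min x.val (n - 1), by omega⟩, mem_OSurj.2 ⟨?_, ?_⟩⟩
  · intro x y hxy
    rw [Fin.le_def] at hxy ⊢
    simp only
    omega
  · intro i
    refine ⟨⟨i.val, by have := i.isLt; omega⟩, ?_⟩
    have := i.isLt
    exact Fin.ext (by simp; omega)

lemma comp_mem_OSurj {s : Fin m → Fin n} {t : Fin l → Fin m}
    (hs : s ∈ OSurj m n) (ht : t ∈ OSurj l m) : s ∘ t ∈ OSurj l n := by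
  rw [mem_OSurj] at *
  exact ⟨hs.1.comp ht.1, hs.2.comp ht.2⟩

lemma fromSet_congr {a b : ℕ} (ha : 0 < a) {S S' : Finset (Fin a)}
    (h : S = S') (h0 : (⟨0, ha⟩ : Fin a) ∈ S) (hc : S.card = b)
    (h0' : (⟨0, ha⟩ : Fin a) ∈ S') (hc' : S'.card = b) :
    fromSet ha S h0 hc = fromSet ha S' h0' hc' := by
  subst h; rfl

lemma strt_inj {a b : ℕ} (ha : 0 < a) {t t' : Fin a → Fin b}
    (htm : Monotone t) (hts : Function.Surjective t)
    (htm' : Monotone t') (hts' : Function.Surjective t')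
    (h : strt t = strt t') : t = t' := by
  have h1 := fromSet_strt ha hts htm
  have h2 := fromSet_strt ha hts' htm'
  rw [← h1, ← h2]
  exact fromSet_congr ha h _ _ _ _

lemma card_fib (hn : 1 ≤ n) (hm : n ≤ m) (hl : m ≤ l) {u : Fin l → Fin n}
    (hu : u ∈ OSurj l n) :
    (((OSurj m n) ×ˢ (OSurj l m)).filter fun p => p.1 ∘ p.2 = u).card
      = (l - n).choose (m - n) := by
  classical
  have hl0 : 0 < l := by omega
  rw [mem_OSurj] at hu
  obtain ⟨hum, hus⟩ := hu
  -- Step A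
  have stepA : (((OSurj m n) ×ˢ (OSurj l m)).filter fun p => p.1 ∘ p.2 = u).card
      = ((OSurj l m).filter fun t => strt u ⊆ strt t).card := by
    apply Finset.card_bij (fun p _ => p.2)
    · rintro ⟨s, t⟩ hp
      simp only [Finset.mem_filter, Finset.mem_product] at hp
      obtain ⟨⟨hs, ht⟩, hcomp⟩ := hp
      rw [mem_OSurj] at hs ht
      refine Finset.mem_filter.2 ⟨mem_OSurj.2 ht, strt_subset_of_refines fun x y hxy => ?_⟩
      rw [← hcomp]; simp only [Function.comp_apply]; simp only at hxy; rw [hxy]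
    · rintro ⟨s, t⟩ hp ⟨s', t'⟩ hp' hst
      simp only at hst
      subst hst
      simp only [Finset.mem_filter, Finset.mem_product] at hp hp'
      have hts : Function.Surjective t := (mem_OSurj.1 hp.1.2).2
      have : s = s' := by
        funext i
        obtain ⟨x, rfl⟩ := hts i
        have := hp.2.trans hp'.2.symm
        exact congrFun this x
      rw [this]
    · intro t ht
      simp only [Finset.mem_filter] at ht
      obtain ⟨htO, hsub⟩ := ht
      rw [mem_OSurj] at htO
      obtain ⟨htm, hts⟩ := htO
      have href : ∀ x y, t x = t y → u x = u y :=
        fun x y hxy => refines_of_strt_subset htm hum hsub hxy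
      refine ⟨⟨u ∘ minFib hts, t⟩, Finset.mem_filter.2 ⟨Finset.mem_product.2
        ⟨mem_OSurj.2 ⟨?_, ?_⟩, mem_OSurj.2 ⟨htm, hts⟩⟩, ?_⟩, rfl⟩
      · exact hum.comp (minFib_strictMono hts htm).monotone
      · intro i
        obtain ⟨x, hx⟩ := hus i
        exact ⟨t x, by simp [href _ _ (t_minFib hts (t x)), hx]⟩
      · funext x
        simp [href _ _ (t_minFib hts (t x))]
  -- Step B
  have stepB : ((OSurj l m).filter fun t => strt u ⊆ strt t).card
      = (Finset.powersetCard (m - n) ((strt u)ᶜ)).card := by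
    apply Finset.card_bij (fun t _ => strt t \ strt u)
    · intro t ht
      simp only [Finset.mem_filter] at ht
      obtain ⟨htO, hsub⟩ := ht
      rw [mem_OSurj] at htO
      rw [Finset.mem_powersetCard]
      constructor
      · intro z hz
        rw [Finset.mem_compl]
        exact (Finset.mem_sdiff.1 hz).2
      · rw [Finset.card_sdiff_of_subset hsub, card_strt htO.2, card_strt hus]
    · intro t ht t' ht' hdiff
      simp only [Finset.mem_filter] at ht ht'
      have h1 : strt t = strt t' := by
        have e1 := Finset.sdiff_union_of_subset ht.2
        have e2 := Finset.sdiff_union_of_subset ht'.2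
        rw [← e1, ← e2, hdiff]
      have hO := mem_OSurj.1 ht.1
      have hO' := mem_OSurj.1 ht'.1
      exact strt_inj hl0 hO.1 hO.2 hO'.1 hO'.2 h1
    · intro B hB
      rw [Finset.mem_powersetCard] at hB
      obtain ⟨hBsub, hBcard⟩ := hB
      have hdisj : Disjoint B (strt u) := by
        rw [Finset.disjoint_right]
        intro z hz hzB
        exact (Finset.mem_compl.1 (hBsub hzB)) hz
      set S := B ∪ strt u with hS
      have h0S : (⟨0, hl0⟩ : Fin l) ∈ S := Finset.mem_union_right _ (zero_mem_strt hl0 u)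
      have hcS : S.card = m := by
        rw [hS, Finset.card_union_of_disjoint hdisj, hBcard, card_strt hus]
        omega
      set t := fromSet hl0 S h0S hcS with htdef
      have htm : Monotone t := fromSet_monotone _ _ _ _
      have hts : Function.Surjective t := fromSet_surjective _ _ _ _
      have hstrt : strt t = S := strt_fromSet _ _ _ _
      refine ⟨t, Finset.mem_filter.2 ⟨mem_OSurj.2 ⟨htm, hts⟩, ?_⟩, ?_⟩
      · rw [hstrt]; exact Finset.subset_union_right
      · rw [hstrt, hS, Finset.union_sdiff_cancel_right hdisj]
  rw [stepA, stepB, Finset.card_powersetCard, Finset.card_compl, card_strt hus,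
    Fintype.card_fin]

end osurj

section sums
variable {l m n : ℕ}

lemma sum_comp_eq (hn : 1 ≤ n) (hm : n ≤ m) (hl : m ≤ l) {γ : Type} [AddCommMonoid γ]
    (F : Multiset ℕ → γ) :
    ∑ s ∈ OSurj m n, ∑ t ∈ OSurj l m, F (proj (s ∘ t))
    = (l - n).choose (m - n) • ∑ u ∈ OSurj l n, F (proj u) := by
  classical
  rw [← Finset.sum_product' (OSurj m n) (OSurj l m) (fun s t => F (proj (s ∘ t)))]
  rw [← Finset.sum_fiberwise_of_maps_to (g := fun p : (Fin m → Fin n) × (Fin l → Fin m) =>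
    p.1 ∘ p.2) (t := OSurj l n) (fun p hp => by
      rw [Finset.mem_product] at hp
      exact comp_mem_OSurj hp.1 hp.2)]
  rw [Finset.smul_sum]
  apply Finset.sum_congr rfl
  intro u hu
  have : ∀ p ∈ (OSurj m n ×ˢ OSurj l m).filter
      (fun p : (Fin m → Fin n) × (Fin l → Fin m) => p.1 ∘ p.2 = u),
      F (proj (p.1 ∘ p.2)) = F (proj u) := by
    intro p hp
    rw [(Finset.mem_filter.1 hp).2]
  rw [Finset.sum_congr rfl this, Finset.sum_const, card_fib hn hm hl hu]

lemma card_mul_eq (hn : 1 ≤ n) (hm : n ≤ m) (hl : m ≤ l) :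
    (OSurj m n).card * (OSurj l m).card = (l - n).choose (m - n) * (OSurj l n).card := by
  classical
  rw [← Finset.card_product]
  rw [Finset.card_eq_sum_card_fiberwise (f := fun p : (Fin m → Fin n) × (Fin l → Fin m) =>
    p.1 ∘ p.2) (t := OSurj l n) (fun p hp => by
      rw [Finset.mem_coe, Finset.mem_product] at hp
      exact comp_mem_OSurj hp.1 hp.2)]
  rw [Finset.sum_congr rfl (fun u hu => card_fib hn hm hl hu), Finset.sum_const,
    smul_eq_mul, mul_comm]

lemma sum_perm_eq {γ : Type} [AddCommMonoid γ] (F : Multiset ℕ → γ) (s : Fin m → Fin n) :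
    ∑ t ∈ OSurj l m, ∑ σ : Equiv.Perm (Fin m), F (proj (s ∘ ⇑σ ∘ t))
    = m.factorial • ∑ t ∈ OSurj l m, F (proj (s ∘ t)) := by
  classical
  rw [Finset.sum_comm]
  have key : ∀ σ : Equiv.Perm (Fin m),
      ∑ t ∈ OSurj l m, F (proj (s ∘ ⇑σ ∘ t)) = ∑ t ∈ OSurj l m, F (proj (s ∘ t)) := by
    intro σ
    refine Finset.sum_nbij' (fun t => mk_mono (⇑σ ∘ t)) (fun t => mk_mono (⇑σ.symm ∘ t))
      ?_ ?_ ?_ ?_ ?_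
    · intro t ht
      rw [mem_OSurj] at ht ⊢
      exact ⟨monotone_mk_mono _, surjective_mk_mono (σ.surjective.comp ht.2)⟩
    · intro t ht
      rw [mem_OSurj] at ht ⊢
      exact ⟨monotone_mk_mono _, surjective_mk_mono (σ.symm.surjective.comp ht.2)⟩
    · intro t ht
      rw [mem_OSurj] at ht
      apply mono_unique (monotone_mk_mono _) ht.1
      intro i
      rw [fibsz_mk_mono]
      have h1 : fibsz (⇑σ.symm ∘ mk_mono (⇑σ ∘ t)) i = fibsz (mk_mono (⇑σ ∘ t)) (σ i) := by
        have := fibsz_equiv_comp (mk_mono (⇑σ ∘ t)) σ.symm i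
        simpa using this
      rw [h1, fibsz_mk_mono]
      have h2 := fibsz_equiv_comp t σ (σ i)
      rw [h2, Equiv.symm_apply_apply]
    · intro t ht
      rw [mem_OSurj] at ht
      apply mono_unique (monotone_mk_mono _) ht.1
      intro i
      rw [fibsz_mk_mono]
      have h1 : fibsz (⇑σ ∘ mk_mono (⇑σ.symm ∘ t)) i = fibsz (mk_mono (⇑σ.symm ∘ t)) (σ.symm i) :=
        fibsz_equiv_comp (mk_mono (⇑σ.symm ∘ t)) σ i
      rw [h1, fibsz_mk_mono]
      have h2 := fibsz_equiv_comp t σ.symm (σ.symm i)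
      simpa using h2
    · intro t ht
      congr 1
      apply proj_congr
      intro j
      have e1 : s ∘ ⇑σ ∘ t = s ∘ (⇑σ ∘ t) := rfl
      have e2 : s ∘ mk_mono (⇑σ ∘ t) = s ∘ (mk_mono (⇑σ ∘ t)) := rfl
      rw [e1, e2, fibsz_comp, fibsz_comp]
      exact Finset.sum_congr rfl fun i _ => (fibsz_mk_mono (⇑σ ∘ t) i).symm
  rw [Finset.sum_congr rfl fun σ _ => key σ, Finset.sum_const, Finset.card_univ,
    Fintype.card_perm, Fintype.card_fin]

end sums

/-- `Q_{m,n}`, the uniform average of the `δ_{proj s}` over order-preserving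
surjections `s : Fin m → Fin n`. -/
noncomputable def Q (K : Type) [Field K] (m n : ℕ) : Multiset ℕ →₀ K :=
  ((OSurj m n).card : K)⁻¹ • ∑ s ∈ OSurj m n, Finsupp.single (proj s) (1 : K)

section main
variable (K : Type) [Field K] [CharZero K] {l m n : ℕ}

lemma Q_apply (a : Multiset ℕ) :
    Q K m n a = ((OSurj m n).card : K)⁻¹ * ((OSurj m n).filter fun s => proj s = a).card := by
  classical
  rw [Q, Finsupp.smul_apply, Finsupp.finset_sum_apply, smul_eq_mul]
  congr 1
  rw [Finset.sum_congr rfl (fun s _ => Finsupp.single_apply), Finset.sum_boole]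

lemma Q_support_subset : (Q K m n).support ⊆ (OSurj m n).image proj := by
  classical
  intro a ha
  rw [Finsupp.mem_support_iff] at ha
  by_contra hmem
  apply ha
  rw [Q_apply]
  have : ((OSurj m n).filter fun s => proj s = a) = ∅ := by
    rw [Finset.filter_eq_empty_iff]
    intro s hs hproj
    exact hmem (Finset.mem_image.2 ⟨s, hs, hproj⟩)
  rw [this]
  simp

lemma starComp_eq_sum (x y : Multiset ℕ →₀ K) (S T : Finset (Multiset ℕ))
    (hS : x.support ⊆ S) (hT : y.support ⊆ T) :
    starComp K m n l x y = ∑ a ∈ S, ∑ b ∈ T, (x a * y b) • starOf K m n l a b := by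
  rw [starComp]
  rw [Finset.sum_subset hS (fun a _ ha => by
    rw [Finsupp.notMem_support_iff] at ha
    simp [ha])]
  apply Finset.sum_congr rfl
  intro a _
  exact Finset.sum_subset hT (fun b _ hb => by
    rw [Finsupp.notMem_support_iff] at hb
    simp [hb])

lemma sum_fiber {γ : Type} [AddCommMonoid γ] {a b : ℕ} (s : Finset (Fin a → Fin b))
    (F : Multiset ℕ → γ) :
    ∑ t ∈ s, F (proj t)
      = ∑ lam ∈ s.image proj, ((s.filter fun t => proj t = lam).card) • F lam := by
  classical
  rw [← Finset.sum_fiberwise_of_maps_to (g := proj) (t := s.image proj)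
    (fun t ht => Finset.mem_image_of_mem proj ht) (fun t => F (proj t))]
  apply Finset.sum_congr rfl
  intro lam _
  rw [Finset.sum_congr rfl (fun t ht => by rw [(Finset.mem_filter.1 ht).2]), Finset.sum_const]

theorem Qcomp (hn : 1 ≤ n) (hm : n ≤ m) (hl : m ≤ l) :
    starComp K m n l (Q K m n) (Q K l m) = Q K l n := by
  classical
  set c1 := (OSurj m n).card with hc1
  set c2 := (OSurj l m).card with hc2
  set c3 := (OSurj l n).card with hc3
  have hm1 : 1 ≤ m := hn.trans hm
  have hc1ne : (c1 : K) ≠ 0 :=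
    Nat.cast_ne_zero.2 (Finset.card_pos.2 (OSurj_nonempty hn hm)).ne'
  have hc2ne : (c2 : K) ≠ 0 :=
    Nat.cast_ne_zero.2 (Finset.card_pos.2 (OSurj_nonempty hm1 hl)).ne'
  have hc3ne : (c3 : K) ≠ 0 :=
    Nat.cast_ne_zero.2 (Finset.card_pos.2 (OSurj_nonempty hn (hm.trans hl))).ne' 
  -- step I : rewrite starComp as double sum over OSurj of starElt
  have stepI : starComp K m n l (Q K m n) (Q K l m)
      = ((c1 : K) * c2)⁻¹ • ∑ s ∈ OSurj m n, ∑ t ∈ OSurj l m, starElt K s t := by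
    rw [starComp_eq_sum K (Q K m n) (Q K l m) ((OSurj m n).image proj)
      ((OSurj l m).image proj) (Q_support_subset K) (Q_support_subset K)]
    have inner : ∀ s ∈ OSurj m n, ∀ t ∈ OSurj l m,
        starElt K s t = starOf K m n l (proj s) (proj t) := by
      intro s hs t ht
      exact (starOf_eq K (mem_OSurj.1 hs).2 (mem_OSurj.1 ht).2).symm
    have h1 : ∑ s ∈ OSurj m n, ∑ t ∈ OSurj l m, starElt K s t
        = ∑ s ∈ OSurj m n, ∑ t ∈ OSurj l m, starOf K m n l (proj s) (proj t) :=
      Finset.sum_congr rfl fun s hs => Finset.sum_congr rfl fun t ht => inner s hs t ht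
    rw [h1]
    have h2 : ∀ s : Fin m → Fin n, ∑ t ∈ OSurj l m, starOf K m n l (proj s) (proj t)
        = ∑ b ∈ (OSurj l m).image proj,
            (((OSurj l m).filter fun t => proj t = b).card) • starOf K m n l (proj s) b :=
      fun s => sum_fiber _ _
    rw [Finset.sum_congr rfl fun s _ => h2 s]
    rw [sum_fiber (OSurj m n) (fun a => ∑ b ∈ (OSurj l m).image proj,
      (((OSurj l m).filter fun t => proj t = b).card) • starOf K m n l a b)]
    rw [Finset.smul_sum]
    apply Finset.sum_congr rfl
    intro a _
    rw [Finset.smul_sum, Finset.smul_sum]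
    apply Finset.sum_congr rfl
    intro b _
    rw [Q_apply, Q_apply]
    rw [← Nat.cast_smul_eq_nsmul K (((OSurj l m).filter fun t => proj t = b).card),
      ← Nat.cast_smul_eq_nsmul K (((OSurj m n).filter fun s => proj s = a).card)]
    rw [smul_smul, smul_smul]
    congr 1
    rw [mul_inv]
    ring
  rw [stepI]
  -- step II : eliminate the permutations
  have stepII : ∀ s : Fin m → Fin n, ∑ t ∈ OSurj l m, starElt K s t
      = ∑ t ∈ OSurj l m, Finsupp.single (proj (s ∘ t)) (1 : K) := by
    intro s
    have : ∑ t ∈ OSurj l m, starElt K s t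
        = (m.factorial : K)⁻¹ • ∑ t ∈ OSurj l m, ∑ σ : Equiv.Perm (Fin m),
            Finsupp.single (proj (s ∘ ⇑σ ∘ t)) (1 : K) := by
      rw [Finset.smul_sum]
      rfl
    rw [this, sum_perm_eq (fun lam => Finsupp.single lam (1 : K)) s,
      ← Nat.cast_smul_eq_nsmul K, smul_smul, inv_mul_cancel₀
        (Nat.cast_ne_zero.2 (Nat.factorial_ne_zero m)), one_smul]
  rw [Finset.sum_congr rfl fun s _ => stepII s]
  -- step III : group by the composite
  rw [sum_comp_eq hn hm hl (fun lam => Finsupp.single lam (1 : K))]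
  -- step IV : scalars
  rw [← Nat.cast_smul_eq_nsmul K, smul_smul, Q]
  congr 1
  have hkey : c1 * c2 = (l - n).choose (m - n) * c3 := card_mul_eq hn hm hl
  have hCne : ((l - n).choose (m - n) : K) ≠ 0 :=
    Nat.cast_ne_zero.2 (Nat.choose_pos (by omega)).ne'
  have hcast : ((c1 : K) * c2) = ((l - n).choose (m - n) : K) * c3 := by
    exact_mod_cast congrArg (Nat.cast : ℕ → K) hkey
  rw [hcast, mul_inv, mul_comm (((l - n).choose (m - n) : K))⁻¹ ((c3 : K))⁻¹, mul_assoc,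
    inv_mul_cancel₀ hCne, mul_one]

end main

/-- `Ppart K n k = P_{n+k,n}` where `P_{n,n} = δ_{(1^n)}`,
`P_{m+1,n} = P_{m,n} * δ_{(2,1^{m-1})}` (so `P_{m,n} = P_{n+1,n} * … * P_{m,m−1}`). -/
noncomputable def Ppart (K : Type) [Field K] (n : ℕ) : ℕ → (Multiset ℕ →₀ K)
  | 0 => Finsupp.single (Multiset.replicate n 1) 1
  | k + 1 => starComp K (n + k) n (n + k + 1) (Ppart K n k)
      (Finsupp.single (2 ::ₘ Multiset.replicate (n + k - 1) 1) 1)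

/-- The monoidal product `⊙ : K[Part(m,n)] × K[Part(m',n')] → K[Part(m+m',n+n')]`,
bilinear extension of `δ_λ ⊙ δ_μ = (−1)^{(m−n)n'} Q_{m+m',n+n'}`. -/
noncomputable def odot (K : Type) [Field K] (m n m' n' : ℕ)
    (x y : Multiset ℕ →₀ K) : Multiset ℕ →₀ K :=
  ∑ a ∈ x.support, ∑ b ∈ y.support,
    (x a * y b) • ((-1 : K) ^ ((m - n) * n') • Q K (m + m') (n + n'))

section part2
variable (K : Type) [Field K] [CharZero K]

lemma OSurj_self (n : ℕ) : OSurj n n = {id} := by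
  ext f
  rw [mem_OSurj, Finset.mem_singleton]
  constructor
  · rintro ⟨hmono, hsurj⟩
    have hinj : Function.Injective f := Finite.injective_iff_surjective.2 hsurj
    have hsm : StrictMono f := hmono.strictMono_of_injective hinj
    exact (StrictMono.range_inj hsm strictMono_id).1
      (by rw [Set.range_id]; exact Set.range_eq_univ.2 hsurj)
  · rintro rfl
    exact ⟨monotone_id, Function.surjective_id⟩

lemma proj_id (n : ℕ) : proj (id : Fin n → Fin n) = Multiset.replicate n 1 := by
  rw [proj_def]
  apply Multiset.eq_replicate.2
  constructor
  · simp
  · intro x hx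
    rw [Multiset.mem_map] at hx
    obtain ⟨i, _, rfl⟩ := hx
    unfold fibsz
    rw [Finset.card_eq_one]
    exact ⟨i, by ext j; simp⟩

lemma Q_self (n : ℕ) : Q K n n = Finsupp.single (Multiset.replicate n 1) 1 := by
  rw [Q, OSurj_self, Finset.sum_singleton, proj_id, Finset.card_singleton]
  simp

lemma proj_osurj_succ {a : ℕ} (ha : 1 ≤ a) {t : Fin (a + 1) → Fin a} (ht : t ∈ OSurj (a + 1) a) :
    proj t = 2 ::ₘ Multiset.replicate (a - 1) 1 := by
  classical
  rw [mem_OSurj] at ht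
  have hsum : ∑ i, fibsz t i = a + 1 := sum_fibsz t
  have hpos : ∀ i, 1 ≤ fibsz t i := fibsz_pos ht.2
  set e : Fin a → ℕ := fun i => fibsz t i - 1 with he
  have hesum : ∑ i, e i = 1 := by
    have h1 : ∑ i, fibsz t i = ∑ i, (e i + 1) := by
      apply Finset.sum_congr rfl
      intro i _
      have := hpos i
      simp only [he]
      omega
    rw [Finset.sum_add_distrib, Finset.sum_const, Finset.card_univ, Fintype.card_fin,
      smul_eq_mul, mul_one] at h1
    omega
  obtain ⟨i₀, _, hi₀⟩ := Finset.exists_ne_zero_of_sum_ne_zero (by rw [hesum]; omega :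
    ∑ i ∈ Finset.univ, e i ≠ 0)
  have hsplit : e i₀ + ∑ i ∈ Finset.univ.erase i₀, e i = 1 := by
    rw [Finset.add_sum_erase _ e (Finset.mem_univ i₀), hesum]
  have hei₀ : e i₀ = 1 := by omega
  have herase : ∀ i ∈ Finset.univ.erase i₀, e i = 0 := by
    have h0 : ∑ i ∈ Finset.univ.erase i₀, e i = 0 := by omega
    exact fun i hi => (Finset.sum_eq_zero_iff).1 h0 i hi
  have hfib₀ : fibsz t i₀ = 2 := by have := hpos i₀; simp only [he] at hei₀; omega
  have hfib : ∀ i ∈ Finset.univ.erase i₀, fibsz t i = 1 := by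
    intro i hi
    have := herase i hi
    have := hpos i
    simp only [he] at *
    omega
  rw [proj_def]
  have huniv : (Finset.univ : Finset (Fin a)).val = i₀ ::ₘ (Finset.univ.erase i₀).val := by
    rw [Finset.erase_val,
      Multiset.cons_erase (by simp : i₀ ∈ (Finset.univ : Finset (Fin a)).val)]
  rw [huniv, Multiset.map_cons, hfib₀]
  congr 1
  apply Multiset.eq_replicate.2
  refine ⟨?_, ?_⟩
  · rw [Multiset.card_map]
    change (Finset.univ.erase i₀).card = a - 1
    rw [Finset.card_erase_of_mem (Finset.mem_univ i₀), Finset.card_univ, Fintype.card_fin]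
  · intro x hx
    rw [Multiset.mem_map] at hx
    obtain ⟨i, hi, rfl⟩ := hx
    exact hfib i (by exact_mod_cast hi)

lemma Q_succ {a : ℕ} (ha : 1 ≤ a) :
    Q K (a + 1) a = Finsupp.single (2 ::ₘ Multiset.replicate (a - 1) 1) 1 := by
  rw [Q]
  have hconst : ∀ t ∈ OSurj (a + 1) a, Finsupp.single (proj t) (1 : K)
      = Finsupp.single (2 ::ₘ Multiset.replicate (a - 1) 1) (1 : K) := by
    intro t ht
    rw [proj_osurj_succ ha ht]
  rw [Finset.sum_congr rfl hconst, Finset.sum_const, ← Nat.cast_smul_eq_nsmul K, smul_smul,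
    inv_mul_cancel₀ (Nat.cast_ne_zero.2 (Finset.card_pos.2
      (OSurj_nonempty ha (by omega))).ne'), one_smul]

lemma Ppart_eq {n : ℕ} (hn : 1 ≤ n) : ∀ k, Ppart K n k = Q K (n + k) n := by
  intro k
  induction k with
  | zero => rw [Ppart, Nat.add_zero, Q_self]
  | succ k ih =>
    rw [Ppart, ih, ← Q_succ K (show 1 ≤ n + k by omega),
      Qcomp K hn (by omega) (by omega)]
    rfl

end part2


/-- for `l ≥ m ≥ n ≥ 1`, the uniform averages over order-preserving
surjections compose to a uniform average, `Q_{m,n} * Q_{l,m} = Q_{l,n}`; in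
particular the element `P_{m,n} = P_{n+1,n} * … * P_{m,m−1}` (with
`P_{n,n} = δ_{(1^n)}` and `P_{m,m−1} = δ_{(2,1^{m−2})}`, encoded by
`Ppart K n (m − n)`) equals `Q_{m,n}`. -/
theorem stmt13 (K : Type) [Field K] [CharZero K] {l m n : ℕ}
    (hn : 1 ≤ n) (hm : n ≤ m) (hl : m ≤ l) :
    starComp K m n l (Q K m n) (Q K l m) = Q K l n ∧
    Ppart K n (m - n) = Q K m n := by
  refine ⟨Qcomp K hn hm hl, ?_⟩
  have := Ppart_eq K hn (m - n)
  rwa [Nat.add_sub_cancel' hm] at this
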